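/- arXiv:2306.08519 — 3 statements merged into one kernel-verified Lean document; each statement's English description precedes it below -/
import Mathlib

section
/- Let 1 ≤ j ≤ I−1. Assume: if τ(j) > 0 and A(j) ≥ 0 then a(j) ≥ a(i) for every 1 ≤ i ≤ j−1; and if τ(j) > 0 and A(j) ≤ 0 then a(j) ≤ a(i) for every 1 ≤ i ≤ j−1. Then θ(j) is continuous on [0,T] and monotone on [0,T]; moreover, if A(j) ≥ 0 then θ(j) is monotone nondecreasing, and if A(j) ≤ 0 then θ(j) is monotone nonincreasing. -/
open MeasureTheory

/-- `a_Σ^{≥j} = Σ_{k=j}^{I} a(k)`. -/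
noncomputable def aSig (I : ℕ) (a : ℕ → ℝ) (j : ℕ) : ℝ :=
  ∑ k ∈ Finset.Icc j I, a k

/-- `A(j) = a(j) − a_Σ^{≥j}/(I−j+1)` for `j ≤ I−1`, and `A(I) = a(I) − a_Σ^{≥I−1}/2`. -/
noncomputable def Acoef (I : ℕ) (a : ℕ → ℝ) (j : ℕ) : ℝ :=
  if j = I then a I - aSig I a (I - 1) / 2
  else a j - aSig I a j / ((I : ℝ) - (j : ℝ) + 1)

/-- The largest index `j ≤ I−2` with `τ(j) ≤ t` (and `0` if none). -/
noncomputable def lastIdx (I : ℕ) (τ : ℕ → ℝ) (t : ℝ) : ℕ :=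
  (Finset.filter (fun j => τ j ≤ t) (Finset.range (I - 1))).sup id

/-- The candidate equilibrium stock price drift `μ`, defined piecewise:
for `t ∈ [τ(j), τ(j+1))` (with `0 ≤ j ≤ I−2` the largest index with `τ(j) ≤ t`),
`μ(t) = −κ(t)·(γ(t)·a_Σ^{≥j+1}/(I−j) + Σ_{k=1}^{j} γ(τ(k))·A(k)/(I−k))`, and
for `t ∈ [τ(I−1), T]`,
`μ(t) = −κ(t)·(γ(t)·a_Σ^{≥I−1}/2 + Σ_{k=1}^{I−2} γ(τ(k))·A(k)/(I−k))`. -/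
noncomputable def muDrift (κ γ : ℝ → ℝ) (I : ℕ) (a : ℕ → ℝ) (τ : ℕ → ℝ) (t : ℝ) : ℝ :=
  if t < τ (I - 1) then
    -(κ t) * (γ t * aSig I a (lastIdx I τ t + 1) / ((I : ℝ) - (lastIdx I τ t : ℝ))
      + ∑ k ∈ Finset.Icc 1 (lastIdx I τ t), γ (τ k) * Acoef I a k / ((I : ℝ) - (k : ℝ)))
  else
    -(κ t) * (γ t * aSig I a (I - 1) / 2
      + ∑ k ∈ Finset.Icc 1 (I - 2), γ (τ k) * Acoef I a k / ((I : ℝ) - (k : ℝ)))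

/-- Agent `(j)`'s candidate optimal trading strategy:
`θ(j)(t) = θ(j)_{0−} + μ(t)/κ(t) + γ(t)·a(j)` for `t ≤ τ(j)`, frozen afterwards. -/
noncomputable def thetaEq (κ γ : ℝ → ℝ) (I : ℕ) (a : ℕ → ℝ) (τ : ℕ → ℝ)
    (θ0 : ℕ → ℝ) (j : ℕ) (t : ℝ) : ℝ :=
  if t ≤ τ j then θ0 j + muDrift κ γ I a τ t / κ t + γ t * a j
  else θ0 j + muDrift κ γ I a τ (τ j) / κ (τ j) + γ (τ j) * a j

noncomputable def tauHat (T : ℝ) (I : ℕ) (τ : ℕ → ℝ) (k : ℕ) : ℝ :=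
  if k = I - 1 then T else τ k
noncomputable def bCoef (I : ℕ) (a : ℕ → ℝ) (j k : ℕ) : ℝ :=
  a j - aSig I a (k + 1) / ((I : ℝ) - (k : ℝ))
lemma aSig_neg (I : ℕ) (a : ℕ → ℝ) (k : ℕ) : aSig I (fun i => -a i) k = -aSig I a k := by
  simp [aSig]
lemma Acoef_neg (I : ℕ) (a : ℕ → ℝ) (k : ℕ) : Acoef I (fun i => -a i) k = -Acoef I a k := by
  unfold Acoef
  split <;> simp [aSig_neg] <;> ring
lemma abel_sum (f g : ℕ → ℝ) : ∀ m : ℕ,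
    (∑ k ∈ Finset.Icc 1 m, f k * (g k - g (k-1)))
      + ∑ k ∈ Finset.range m, g k * (f (k+1) - f k)
    = f m * g m - f 0 * g 0
  | 0 => by simp
  | (m+1) => by
    rw [Finset.sum_Icc_succ_top (by omega : 1 ≤ m + 1), Finset.sum_range_succ]
    have ih := abel_sum f g m
    simp only [Nat.add_sub_cancel]
    linear_combination ih
lemma Acoef_div_eq (I : ℕ) (a : ℕ → ℝ) (j k : ℕ) (hk1 : 1 ≤ k) (hkI : k + 1 ≤ I) :
    Acoef I a k / ((I:ℝ) - (k:ℝ)) = bCoef I a j k - bCoef I a j (k-1) := by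
  have hnk : k ≠ I := by omega
  have hsplit : aSig I a k = a k + aSig I a (k+1) := by
    unfold aSig
    have hU : Finset.Icc k I = insert k (Finset.Icc (k+1) I) := by
      ext x; simp only [Finset.mem_Icc, Finset.mem_insert]; omega
    rw [hU, Finset.sum_insert (by simp)]
  have hc : ((k - 1 : ℕ) : ℝ) = (k:ℝ) - 1 := by
    push_cast [Nat.cast_sub hk1]; ring
  have hkk : k - 1 + 1 = k := by omega
  unfold Acoef bCoef
  rw [if_neg hnk, hkk, hc, hsplit]
  have h1 : (1:ℝ) ≤ (I:ℝ) - k := by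
    have : (k:ℝ) + 1 ≤ (I:ℝ) := by exact_mod_cast hkI
    linarith
  have hd1 : (I:ℝ) - k ≠ 0 := by linarith
  have hd2 : (I:ℝ) - k + 1 ≠ 0 := by linarith
  have hd3 : (I:ℝ) - ((k:ℝ) - 1) ≠ 0 := by
    intro h; apply hd2; linarith [h]
  field_simp
  ring
lemma key_alg (I : ℕ) (a : ℕ → ℝ) (j : ℕ) (f : ℕ → ℝ) (hf0 : f 0 = 0) (c : ℝ)
    (m : ℕ) (hm : m + 2 ≤ I) :
    -(c * aSig I a (m+1) / ((I:ℝ) - (m:ℝ))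
        + ∑ k ∈ Finset.Icc 1 m, f k * Acoef I a k / ((I:ℝ) - (k:ℝ))) + c * a j
    = (∑ k ∈ Finset.range m, bCoef I a j k * (f (k+1) - f k))
        + bCoef I a j m * (c - f m) := by
  have hsum : (∑ k ∈ Finset.Icc 1 m, f k * Acoef I a k / ((I:ℝ) - (k:ℝ)))
      = ∑ k ∈ Finset.Icc 1 m, f k * (bCoef I a j k - bCoef I a j (k-1)) := by
    apply Finset.sum_congr rfl
    intro k hk
    rw [Finset.mem_Icc] at hk
    rw [mul_div_assoc, Acoef_div_eq I a j k hk.1 (by omega)]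
  rw [hsum, mul_div_assoc]
  have hb : aSig I a (m+1) / ((I:ℝ) - (m:ℝ)) = a j - bCoef I a j m := by
    unfold bCoef; ring
  rw [hb]
  have habel := abel_sum f (bCoef I a j) m
  rw [hf0] at habel
  linear_combination -habel
noncomputable def Gfun (T : ℝ) (γ : ℝ → ℝ) (I : ℕ) (a : ℕ → ℝ) (τ : ℕ → ℝ) (j : ℕ) (t : ℝ) : ℝ :=
  ∑ k ∈ Finset.range (I - 1),
    bCoef I a j k * (γ (min (tauHat T I τ (k+1)) t) - γ (min (tauHat T I τ k) t))
lemma lastIdx_le (I : ℕ) (τ : ℕ → ℝ) (t : ℝ) (hI : 3 ≤ I) : lastIdx I τ t ≤ I - 2 := by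
  unfold lastIdx
  apply Finset.sup_le
  intro b hb
  have hb' := Finset.mem_of_mem_filter b hb
  rw [Finset.mem_range] at hb'
  simp only [id]
  omega
lemma tau_lastIdx_le (I : ℕ) (τ : ℕ → ℝ) (t : ℝ) (hI : 3 ≤ I) (hτ0 : τ 0 = 0) (ht : 0 ≤ t) :
    τ (lastIdx I τ t) ≤ t := by
  have h0 : 0 ∈ Finset.filter (fun j => τ j ≤ t) (Finset.range (I-1)) := by
    simp only [Finset.mem_filter, Finset.mem_range, hτ0]
    exact ⟨by omega, ht⟩
  obtain ⟨b, hb, hsup⟩ := Finset.exists_mem_eq_sup _ ⟨0, h0⟩ id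
  rw [lastIdx, hsup]
  exact (Finset.mem_filter.mp hb).2
lemma lt_of_gt_lastIdx (I : ℕ) (τ : ℕ → ℝ) (t : ℝ) (k : ℕ)
    (h1 : lastIdx I τ t < k) (h2 : k ≤ I - 2) : t < τ k := by
  by_contra h
  push_neg at h
  have hk : k ∈ Finset.filter (fun j => τ j ≤ t) (Finset.range (I-1)) := by
    simp only [Finset.mem_filter, Finset.mem_range]
    exact ⟨by omega, h⟩
  have := Finset.le_sup (f := id) hk
  simp only [id] at this
  rw [lastIdx] at h1
  omega
lemma Gfun_eq (T : ℝ) (γ : ℝ → ℝ) (I : ℕ) (a : ℕ → ℝ) (τ : ℕ → ℝ) (j : ℕ) (t : ℝ)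
    (m : ℕ) (hI : 3 ≤ I) (hm : m ≤ I - 2) (hT : t ≤ T)
    (hle : ∀ k, k ≤ m → τ k ≤ t)
    (hge : ∀ k, m + 1 ≤ k → k ≤ I - 2 → t ≤ τ k) :
    Gfun T γ I a τ j t
    = (∑ k ∈ Finset.range m, bCoef I a j k * (γ (τ (k+1)) - γ (τ k)))
      + bCoef I a j m * (γ t - γ (τ m)) := by
  have hhat : ∀ k, k ≤ I - 2 → tauHat T I τ k = τ k := fun k hk => if_neg (by omega)
  have hmin_t : ∀ k, m + 1 ≤ k → k ≤ I - 1 → min (tauHat T I τ k) t = t := by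
    intro k hk1 hk2
    by_cases hk : k = I - 1
    · rw [tauHat, if_pos hk]; exact min_eq_right hT
    · rw [hhat k (by omega)]; exact min_eq_right (hge k hk1 (by omega))
  have hmin_τ : ∀ k, k ≤ m → min (tauHat T I τ k) t = τ k := by
    intro k hk
    rw [hhat k (by omega)]; exact min_eq_left (hle k hk)
  unfold Gfun
  rw [Finset.range_eq_Ico, ← Finset.sum_Ico_consecutive _ (Nat.zero_le (m+1)) (by omega : m+1 ≤ I-1)]
  have h2 : (∑ k ∈ Finset.Ico (m+1) (I-1),
      bCoef I a j k * (γ (min (tauHat T I τ (k+1)) t) - γ (min (tauHat T I τ k) t))) = 0 := by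
    apply Finset.sum_eq_zero
    intro k hk
    rw [Finset.mem_Ico] at hk
    rw [hmin_t (k+1) (by omega) (by omega), hmin_t k (by omega) (by omega)]
    ring
  rw [h2, add_zero, ← Finset.range_eq_Ico,
    Finset.sum_range_succ, hmin_t (m+1) le_rfl (by omega), hmin_τ m le_rfl]
  congr 1
  apply Finset.sum_congr rfl
  intro k hk
  rw [Finset.mem_range] at hk
  rw [hmin_τ (k+1) (by omega), hmin_τ k (by omega)]
lemma theta_val (T : ℝ) (κ γ : ℝ → ℝ) (I : ℕ) (hI : 3 ≤ I) (a : ℕ → ℝ) (τ : ℕ → ℝ)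
    (hτ0 : τ 0 = 0) (hτmono : ∀ j k : ℕ, j ≤ k → k ≤ I → τ j ≤ τ k)
    (hγ0 : γ 0 = 0) (j : ℕ) (t : ℝ) (ht : t ∈ Set.Icc 0 T) (hκ : κ t ≠ 0) :
    muDrift κ γ I a τ t / κ t + γ t * a j = Gfun T γ I a τ j t := by
  obtain ⟨ht0, htT⟩ := ht
  have hf0 : (fun k => γ (τ k)) 0 = 0 := by simp [hτ0, hγ0]
  unfold muDrift
  by_cases hlt : t < τ (I-1)
  · rw [if_pos hlt]
    have hm2 : lastIdx I τ t ≤ I - 2 := lastIdx_le I τ t hI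
    have hτm : τ (lastIdx I τ t) ≤ t := tau_lastIdx_le I τ t hI hτ0 ht0
    rw [neg_mul, neg_div, mul_div_cancel_left₀ _ hκ,
      Gfun_eq T γ I a τ j t (lastIdx I τ t) hI hm2 htT
        (fun k hk => le_trans (hτmono k (lastIdx I τ t) hk (by omega)) hτm)
        (fun k hk1 hk2 => (lt_of_gt_lastIdx I τ t k (by omega) hk2).le)]
    exact key_alg I a j (fun k => γ (τ k)) hf0 (γ t) (lastIdx I τ t) (by omega)
  · rw [if_neg hlt]
    push_neg at hlt
    rw [neg_mul, neg_div, mul_div_cancel_left₀ _ hκ,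
      Gfun_eq T γ I a τ j t (I-2) hI le_rfl htT
        (fun k hk => le_trans (hτmono k (I-1) (by omega) (by omega)) hlt)
        (fun k hk1 hk2 => (by omega : False).elim)]
    have hthis := key_alg I a j (fun k => γ (τ k)) hf0 (γ t) (I-2) (by omega)
    have h1 : I - 2 + 1 = I - 1 := by omega
    have h2 : ((I-2:ℕ):ℝ) = (I:ℝ) - 2 := by
      push_cast [Nat.cast_sub (by omega : 2 ≤ I)]; ring
    rw [h1, h2] at hthis
    rw [show (2:ℝ) = (I:ℝ) - ((I:ℝ) - 2) by ring]
    convert hthis using 4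
lemma theta_key (T : ℝ) (κ γ : ℝ → ℝ) (hT : 0 < T)
    (hκpos : ∀ t ∈ Set.Icc (0:ℝ) T, 0 < κ t)
    (hγ0 : γ 0 = 0) (I : ℕ) (hI : 3 ≤ I) (a : ℕ → ℝ) (τ : ℕ → ℝ)
    (hτ0 : τ 0 = 0) (hτmono : ∀ j k : ℕ, j ≤ k → k ≤ I → τ j ≤ τ k)
    (hτT : τ (I-1) < T) (θ0 : ℕ → ℝ) (j : ℕ) (hj2 : j ≤ I - 1) :
    ∀ t ∈ Set.Icc (0:ℝ) T, thetaEq κ γ I a τ θ0 j t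
      = θ0 j + Gfun T γ I a τ j (min t (τ j)) := by
  intro t ht
  have hτj0 : 0 ≤ τ j := hτ0 ▸ hτmono 0 j (Nat.zero_le j) (by omega)
  have hτjT : τ j ≤ T := le_trans (hτmono j (I-1) hj2 (by omega)) hτT.le
  unfold thetaEq
  split_ifs with h
  · rw [min_eq_left h, add_assoc,
      theta_val T κ γ I hI a τ hτ0 hτmono hγ0 j t ht (ne_of_gt (hκpos t ht))]
  · push_neg at h
    rw [min_eq_right h.le]
    have hmem : τ j ∈ Set.Icc (0:ℝ) T := ⟨hτj0, hτjT⟩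
    rw [add_assoc,
      theta_val T κ γ I hI a τ hτ0 hτmono hγ0 j (τ j) hmem (ne_of_gt (hκpos _ hmem))]
lemma mono_aux (T : ℝ) (γ : ℝ → ℝ) (hγm : MonotoneOn γ (Set.Icc 0 T))
    (u v s s' : ℝ) (huv : u ≤ v) (hu : 0 ≤ u) (hss : s ≤ s') (hs : 0 ≤ s) (hs' : s' ≤ T) :
    γ (min v s) - γ (min u s) ≤ γ (min v s') - γ (min u s') := by
  have hv : 0 ≤ v := le_trans hu huv
  rcases le_total s' u with h | h
  · rw [min_eq_right h, min_eq_right (h.trans huv), min_eq_right (hss.trans h),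
      min_eq_right ((hss.trans h).trans huv), sub_self, sub_self]
  · rw [min_eq_left h]
    rcases le_total s u with h5 | h5
    · rw [min_eq_right h5, min_eq_right (h5.trans huv), sub_self]
      have hle : u ≤ min v s' := le_min huv h
      have := hγm (Set.mem_Icc.mpr ⟨hu, h.trans hs'⟩)
        (Set.mem_Icc.mpr ⟨le_trans hu hle, le_trans (min_le_right _ _) hs'⟩) hle
      linarith
    · rw [min_eq_left h5]
      have hle : min v s ≤ min v s' := min_le_min le_rfl hss
      have := hγm (Set.mem_Icc.mpr ⟨le_min hv hs, le_trans (min_le_right _ _) (hss.trans hs')⟩)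
        (Set.mem_Icc.mpr ⟨le_min hv (hs.trans hss), le_trans (min_le_right _ _) hs'⟩) hle
      linarith
lemma bCoef_nonneg (I : ℕ) (hI : 3 ≤ I) (a : ℕ → ℝ) (j : ℕ) (hj1 : 1 ≤ j) (hj2 : j ≤ I - 1)
    (hij : ∀ i, 1 ≤ i → i ≤ j - 1 → a i ≤ a j)
    (hA : 0 ≤ Acoef I a j) (k : ℕ) (hk : k < j) :
    0 ≤ bCoef I a j k := by
  have hjI : (j:ℝ) + 1 ≤ (I:ℝ) := by exact_mod_cast (by omega : j + 1 ≤ I)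
  have hAd : aSig I a j ≤ ((I:ℝ) - (j:ℝ) + 1) * a j := by
    rw [Acoef, if_neg (by omega : j ≠ I)] at hA
    have hdpos : (0:ℝ) < (I:ℝ) - (j:ℝ) + 1 := by linarith
    rw [sub_nonneg, div_le_iff₀ hdpos] at hA
    linarith [hA]
  have hsplit : aSig I a (k+1) = (∑ i ∈ Finset.Icc (k+1) (j-1), a i) + aSig I a j := by
    unfold aSig
    rw [← Finset.sum_union (by
      rw [Finset.disjoint_left]
      intro x hx hx'
      rw [Finset.mem_Icc] at hx hx'
      omega)]
    congr 1
    ext x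
    simp only [Finset.mem_union, Finset.mem_Icc]
    omega
  have hcard : (Finset.Icc (k+1) (j-1)).card = j - 1 - k := by
    rw [Nat.card_Icc]; omega
  have hsum : (∑ i ∈ Finset.Icc (k+1) (j-1), a i) ≤ ((j:ℝ) - 1 - (k:ℝ)) * a j := by
    have := Finset.sum_le_card_nsmul (Finset.Icc (k+1) (j-1)) a (a j)
      (fun i hi => by
        rw [Finset.mem_Icc] at hi
        exact hij i (by omega) hi.2)
    rw [hcard, nsmul_eq_mul] at this
    have hc : ((j - 1 - k : ℕ) : ℝ) = (j:ℝ) - 1 - (k:ℝ) := by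
      push_cast [Nat.cast_sub (by omega : 1 ≤ j), Nat.cast_sub (by omega : k ≤ j - 1)]
      ring
    rw [hc] at this
    exact this
  have hkI : (k:ℝ) + 1 ≤ (j:ℝ) := by exact_mod_cast (by omega : k + 1 ≤ j)
  have hdpos : (0:ℝ) < (I:ℝ) - (k:ℝ) := by linarith
  rw [bCoef, sub_nonneg, div_le_iff₀ hdpos]
  have : ((j:ℝ) - 1 - (k:ℝ)) * a j + ((I:ℝ) - (j:ℝ) + 1) * a j = a j * ((I:ℝ) - (k:ℝ)) := by
    ring
  linarith [hsplit, hsum, hAd]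
lemma muDrift_neg (κ γ : ℝ → ℝ) (I : ℕ) (a : ℕ → ℝ) (τ : ℕ → ℝ) (t : ℝ) :
    muDrift κ γ I (fun i => -a i) τ t = -muDrift κ γ I a τ t := by
  unfold muDrift
  split <;>
  · simp only [aSig_neg, Acoef_neg, mul_neg, neg_div, Finset.sum_neg_distrib]
    ring
lemma thetaEq_neg (κ γ : ℝ → ℝ) (I : ℕ) (a : ℕ → ℝ) (τ : ℕ → ℝ) (θ0 : ℕ → ℝ) (j : ℕ) (t : ℝ) :
    thetaEq κ γ I (fun i => -a i) τ (fun i => -θ0 i) j t = -thetaEq κ γ I a τ θ0 j t := by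
  unfold thetaEq
  split <;>
  · simp only [muDrift_neg, neg_div]
    ring
lemma master_mono (T : ℝ) (κ γ : ℝ → ℝ) (hT : 0 < T)
    (hκpos : ∀ t ∈ Set.Icc (0:ℝ) T, 0 < κ t)
    (hγm : MonotoneOn γ (Set.Icc 0 T)) (hγ0 : γ 0 = 0)
    (I : ℕ) (hI : 3 ≤ I) (a : ℕ → ℝ) (τ : ℕ → ℝ)
    (hτ0 : τ 0 = 0) (hτmono : ∀ j k : ℕ, j ≤ k → k ≤ I → τ j ≤ τ k)
    (hτT : τ (I-1) < T) (θ0 : ℕ → ℝ) (j : ℕ) (hj1 : 1 ≤ j) (hj2 : j ≤ I - 1)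
    (hpos : 0 < τ j → ∀ i, 1 ≤ i → i ≤ j - 1 → a i ≤ a j)
    (hA : 0 ≤ Acoef I a j) :
    MonotoneOn (thetaEq κ γ I a τ θ0 j) (Set.Icc 0 T) := by
  have hτj0 : 0 ≤ τ j := hτ0 ▸ hτmono 0 j (Nat.zero_le j) (by omega)
  have hτjT : τ j ≤ T := le_trans (hτmono j (I-1) hj2 (by omega)) hτT.le
  intro x hx y hy hxy
  rw [theta_key T κ γ hT hκpos hγ0 I hI a τ hτ0 hτmono hτT θ0 j hj2 x hx,
    theta_key T κ γ hT hκpos hγ0 I hI a τ hτ0 hτmono hτT θ0 j hj2 y hy]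
  rcases eq_or_lt_of_le hτj0 with h0 | h0
  · rw [min_eq_right (by rw [← h0]; exact hx.1), min_eq_right (by rw [← h0]; exact hy.1)]
  · apply add_le_add_right
    unfold Gfun
    apply Finset.sum_le_sum
    intro k hk
    rw [Finset.mem_range] at hk
    have hss : min x (τ j) ≤ min y (τ j) := min_le_min hxy le_rfl
    have hs0 : 0 ≤ min x (τ j) := le_min hx.1 hτj0
    have hs'T : min y (τ j) ≤ T := le_trans (min_le_right _ _) hτjT
    have hsτ : min x (τ j) ≤ τ j := min_le_right _ _
    have hs'τ : min y (τ j) ≤ τ j := min_le_right _ _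
    have hhat0 : ∀ i, i ≤ I - 1 → 0 ≤ tauHat T I τ i := by
      intro i hi
      unfold tauHat
      split
      · exact hT.le
      · rw [← hτ0]; exact hτmono 0 i (Nat.zero_le _) (by omega)
    have hhatmono : tauHat T I τ k ≤ tauHat T I τ (k+1) := by
      rw [tauHat, tauHat, if_neg (by omega : ¬ k = I - 1)]
      split
      · exact le_trans (hτmono k (I-1) (by omega) (by omega)) hτT.le
      · exact hτmono k (k+1) (by omega) (by omega)
    rcases lt_or_ge k j with hkj | hkj
    · have hb : 0 ≤ bCoef I a j k :=
        bCoef_nonneg I hI a j hj1 hj2 (hpos h0) hA k hkj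
      exact mul_le_mul_of_nonneg_left
        (mono_aux T γ hγm _ _ _ _ hhatmono (hhat0 k (by omega)) hss hs0 hs'T) hb
    · have hjk : τ j ≤ tauHat T I τ k := by
        unfold tauHat
        split
        · exact hτjT
        · exact hτmono j k hkj (by omega)
      have hjk1 : τ j ≤ tauHat T I τ (k+1) := le_trans hjk hhatmono
      rw [min_eq_right (le_trans hsτ hjk), min_eq_right (le_trans hsτ hjk1),
        min_eq_right (le_trans hs'τ hjk), min_eq_right (le_trans hs'τ hjk1)]
      simp

/-- under the sign hypotheses of Lemma `theta_sign_lem`, the strategy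
`θ(j)` is continuous and monotone on `[0,T]`; it is nondecreasing if `A(j) ≥ 0` and
nonincreasing if `A(j) ≤ 0`. -/
theorem stmt9 (T : ℝ) (κ γ : ℝ → ℝ) (hT : 0 < T)
    (hκcont : ContinuousOn κ (Set.Icc 0 T))
    (hκpos : ∀ t ∈ Set.Icc (0 : ℝ) T, 0 < κ t)
    (hγcont : ContinuousOn γ (Set.Icc 0 T))
    (hγmono : StrictMonoOn γ (Set.Icc 0 T))
    (hγ0 : γ 0 = 0) (hγT : γ T = 1)
    (I : ℕ) (hI : 3 ≤ I) (a : ℕ → ℝ) (τ : ℕ → ℝ)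
    (hτ0 : τ 0 = 0) (hτmono : ∀ j k : ℕ, j ≤ k → k ≤ I → τ j ≤ τ k)
    (hτlast : τ (I - 1) = τ I) (hτT : τ (I - 1) < T)
    (θ0 : ℕ → ℝ) (j : ℕ) (hj1 : 1 ≤ j) (hj2 : j ≤ I - 1)
    (hpos : 0 < τ j → 0 ≤ Acoef I a j → ∀ i : ℕ, 1 ≤ i → i ≤ j - 1 → a i ≤ a j)
    (hneg : 0 < τ j → Acoef I a j ≤ 0 → ∀ i : ℕ, 1 ≤ i → i ≤ j - 1 → a j ≤ a i) :
    ContinuousOn (thetaEq κ γ I a τ θ0 j) (Set.Icc 0 T) ∧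
    (MonotoneOn (thetaEq κ γ I a τ θ0 j) (Set.Icc 0 T) ∨
      AntitoneOn (thetaEq κ γ I a τ θ0 j) (Set.Icc 0 T)) ∧
    (0 ≤ Acoef I a j → MonotoneOn (thetaEq κ γ I a τ θ0 j) (Set.Icc 0 T)) ∧
    (Acoef I a j ≤ 0 → AntitoneOn (thetaEq κ γ I a τ θ0 j) (Set.Icc 0 T)) := by
  have hγm : MonotoneOn γ (Set.Icc 0 T) := hγmono.monotoneOn
  have hτj0 : 0 ≤ τ j := hτ0 ▸ hτmono 0 j (Nat.zero_le j) (by omega)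
  have hτjT : τ j ≤ T := le_trans (hτmono j (I-1) hj2 (by omega)) hτT.le
  have hhat0 : ∀ i, i ≤ I - 1 → 0 ≤ tauHat T I τ i := by
    intro i hi
    unfold tauHat
    split
    · exact hT.le
    · rw [← hτ0]; exact hτmono 0 i (Nat.zero_le _) (by omega)
  have hcont : ContinuousOn (thetaEq κ γ I a τ θ0 j) (Set.Icc 0 T) := by
    apply ContinuousOn.congr
      (f := fun t => θ0 j + Gfun T γ I a τ j (min t (τ j)))
      (g := thetaEq κ γ I a τ θ0 j) _
      (fun t ht => theta_key T κ γ hT hκpos hγ0 I hI a τ hτ0 hτmono hτT θ0 j hj2 t ht)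
    apply ContinuousOn.add continuousOn_const
    unfold Gfun
    apply continuousOn_finset_sum
    intro k hk
    rw [Finset.mem_range] at hk
    have hcomp : ∀ i, i ≤ I - 1 →
        ContinuousOn (fun t => γ (min (tauHat T I τ i) (min t (τ j)))) (Set.Icc 0 T) := by
      intro i hi
      apply hγcont.comp
        ((continuous_const.min (continuous_id.min continuous_const)).continuousOn)
      intro t ht
      constructor
      · exact le_min (hhat0 i hi) (le_min ht.1 hτj0)
      · exact le_trans (min_le_right _ _) (le_trans (min_le_right _ _) hτjT)
    exact ContinuousOn.mul continuousOn_const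
      ((hcomp (k+1) (by omega)).sub (hcomp k (by omega)))
  have Mpos : 0 ≤ Acoef I a j → MonotoneOn (thetaEq κ γ I a τ θ0 j) (Set.Icc 0 T) :=
    fun hA => master_mono T κ γ hT hκpos hγm hγ0 I hI a τ hτ0 hτmono hτT θ0 j hj1 hj2
      (fun hτ => hpos hτ hA) hA
  have Mneg : Acoef I a j ≤ 0 → AntitoneOn (thetaEq κ γ I a τ θ0 j) (Set.Icc 0 T) := by
    intro hA
    have hM := master_mono T κ γ hT hκpos hγm hγ0 I hI (fun i => -a i) τ hτ0 hτmono hτT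
      (fun i => -θ0 i) j hj1 hj2
      (fun hτ i h1 h2 => neg_le_neg (hneg hτ hA i h1 h2))
      (by rw [Acoef_neg]; linarith)
    intro x hx y hy hxy
    have h1 := hM hx hy hxy
    rw [thetaEq_neg, thetaEq_neg] at h1
    linarith
  exact ⟨hcont,
    (le_total 0 (Acoef I a j)).elim (fun h => Or.inl (Mpos h)) (fun h => Or.inr (Mneg h)),
    Mpos, Mneg⟩
end

section
/- For every 1 ≤ j ≤ I−1 one has Σ_{k=1}^{j} θ(k)(τ(k)) = Σ_{k=1}^{j} θ(k)_{0−} + (I−j) · Σ_{k=1}^{j} γ(τ(k))·A(k)/(I−k). Moreover, if Σ_{k=1}^{I} θ(k)_{0−} = n, then Σ_{k=1}^{I} θ(k)(τ(k)) = n. -/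
open MeasureTheory

lemma aSig_succ (I : ℕ) (a : ℕ → ℝ) (j : ℕ) (h2 : j ≤ I) :
    aSig I a j = a j + aSig I a (j + 1) := by
  unfold aSig
  rw [Finset.Icc_eq_cons_Ioc h2, Finset.sum_cons, ← Finset.Icc_add_one_left_eq_Ioc]


lemma E_const (I : ℕ) (hI : 3 ≤ I) (a : ℕ → ℝ) (g : ℕ → ℝ) (k : ℕ)
    (hk : 1 ≤ k) :
    ∀ m, k ≤ m → m ≤ I - 1 → (∀ i, k ≤ i → i ≤ m → g i = g k) →
    g k * aSig I a (m + 1) / ((I : ℝ) - (m : ℝ))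
      + ∑ i ∈ Finset.Icc 1 m, g i * Acoef I a i / ((I : ℝ) - (i : ℝ))
    = g k * aSig I a (k + 1) / ((I : ℝ) - (k : ℝ))
      + ∑ i ∈ Finset.Icc 1 k, g i * Acoef I a i / ((I : ℝ) - (i : ℝ)) := by
  intro m
  induction m with
  | zero => intro h1 _ _; exact absurd h1 (by omega)
  | succ m ih =>
    intro h1 h2 h3
    rcases eq_or_lt_of_le h1 with he | hlt
    · rw [← he]
    have hkm : k ≤ m := by omega
    rw [Finset.sum_Icc_succ_top (by omega : 1 ≤ m + 1)]
    have key : g k * aSig I a (m + 1 + 1) / ((I : ℝ) - ((m : ℝ) + 1))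
        + g (m + 1) * Acoef I a (m + 1) / ((I : ℝ) - ((m : ℝ) + 1))
        = g k * aSig I a (m + 1) / ((I : ℝ) - (m : ℝ)) := by
      have hg1 : g (m + 1) = g k := h3 _ (by omega) le_rfl
      have hne : ¬ (m + 1 = I) := by omega
      rw [hg1, Acoef, if_neg hne, aSig_succ I a (m + 1) (by omega)]
      have hx : (0 : ℝ) < (I : ℝ) - ((m : ℝ) + 1) := by
        have : (m : ℝ) + 1 < I := by exact_mod_cast (by omega : m + 1 < I)
        linarith
      push_cast
      set x : ℝ := (I : ℝ) - ((m : ℝ) + 1) with hxdef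
      have hx0 : x ≠ 0 := ne_of_gt hx
      have hx1 : x + 1 ≠ 0 := by positivity
      have h1 : (I : ℝ) - ((m:ℝ) + 1) + 1 = x + 1 := by rw [hxdef]
      have h2 : (I : ℝ) - (m:ℝ) = x + 1 := by rw [hxdef]; ring
      rw [h1, h2]
      field_simp
      ring
    have hgoal := ih hkm (by omega) (fun i hi1 hi2 => h3 i hi1 (by omega))
    push_cast at key ⊢
    linarith


lemma muEval (κ γ : ℝ → ℝ) (I : ℕ) (hI : 3 ≤ I) (a : ℕ → ℝ) (τ : ℕ → ℝ)
    (hτmono : ∀ j k : ℕ, j ≤ k → k ≤ I → τ j ≤ τ k)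
    (k : ℕ) (hk1 : 1 ≤ k) (hkI : k ≤ I - 1) :
    muDrift κ γ I a τ (τ k)
      = -(κ (τ k)) * (γ (τ k) * aSig I a (k + 1) / ((I : ℝ) - (k : ℝ))
        + ∑ i ∈ Finset.Icc 1 k, γ (τ i) * Acoef I a i / ((I : ℝ) - (i : ℝ))) := by
  simp only [muDrift]
  by_cases h : τ k < τ (I - 1)
  · rw [if_pos h]
    have hkne : k ≠ I - 1 := by
      intro he; rw [he] at h; exact lt_irrefl _ h
    have hk2 : k ≤ I - 2 := by omega
    set m := lastIdx I τ (τ k) with hmdef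
    have hmemk : k ∈ Finset.filter (fun j => τ j ≤ τ k) (Finset.range (I - 1)) :=
      Finset.mem_filter.mpr ⟨Finset.mem_range.mpr (by omega), le_rfl⟩
    have hkm : k ≤ m := Finset.le_sup (f := id) hmemk
    have hmI : m ≤ I - 2 := Finset.sup_le fun j hj => by
      have := Finset.mem_range.mp (Finset.mem_filter.mp hj).1
      simpa using (by omega : j ≤ I - 2)
    have hτmk : τ m ≤ τ k := by
      obtain ⟨b, hb, hbe⟩ := Finset.exists_mem_eq_sup _ ⟨k, hmemk⟩ (id : ℕ → ℕ)
      rw [hmdef, lastIdx, hbe]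
      exact (Finset.mem_filter.mp hb).2
    have hτm : τ m = τ k := le_antisymm hτmk (hτmono k m hkm (by omega))
    have hg : ∀ i, k ≤ i → i ≤ m → γ (τ i) = γ (τ k) := by
      intro i hi1 hi2
      have h1 : τ k ≤ τ i := hτmono k i hi1 (by omega)
      have h2 : τ i ≤ τ m := hτmono i m hi2 (by omega)
      rw [le_antisymm (h2.trans hτm.le) h1]
    have hE : γ (τ k) * aSig I a (m + 1) / ((I : ℝ) - (m : ℝ))
        + ∑ i ∈ Finset.Icc 1 m, γ (τ i) * Acoef I a i / ((I : ℝ) - (i : ℝ))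
        = γ (τ k) * aSig I a (k + 1) / ((I : ℝ) - (k : ℝ))
        + ∑ i ∈ Finset.Icc 1 k, γ (τ i) * Acoef I a i / ((I : ℝ) - (i : ℝ)) :=
      E_const I hI a (fun i => γ (τ i)) k hk1 m hkm (by omega) hg
    rw [hE]
  · rw [if_neg h]
    have hτm : τ (I - 1) = τ k :=
      le_antisymm (not_lt.mp h) (hτmono k (I - 1) hkI (by omega))
    have hg : ∀ i, k ≤ i → i ≤ I - 1 → γ (τ i) = γ (τ k) := by
      intro i hi1 hi2
      have h1 : τ k ≤ τ i := hτmono k i hi1 (by omega)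
      have h2 : τ i ≤ τ (I - 1) := hτmono i (I - 1) hi2 (by omega)
      rw [le_antisymm (h2.trans hτm.le) h1]
    have hE : γ (τ k) * aSig I a ((I - 1) + 1) / ((I : ℝ) - ((I - 1 : ℕ) : ℝ))
        + ∑ i ∈ Finset.Icc 1 (I - 1), γ (τ i) * Acoef I a i / ((I : ℝ) - (i : ℝ))
        = γ (τ k) * aSig I a (k + 1) / ((I : ℝ) - (k : ℝ))
        + ∑ i ∈ Finset.Icc 1 k, γ (τ i) * Acoef I a i / ((I : ℝ) - (i : ℝ)) :=
      E_const I hI a (fun i => γ (τ i)) k hk1 (I - 1) hkI le_rfl hg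
    rw [← hE]
    congr 1
    have hsum : ∑ i ∈ Finset.Icc 1 (I - 1), γ (τ i) * Acoef I a i / ((I : ℝ) - (i : ℝ))
        = (∑ i ∈ Finset.Icc 1 (I - 2), γ (τ i) * Acoef I a i / ((I : ℝ) - (i : ℝ)))
          + γ (τ (I - 1)) * Acoef I a (I - 1) / ((I : ℝ) - ((I - 1 : ℕ) : ℝ)) := by
      have h21 : I - 2 + 1 = I - 1 := by omega
      rw [← h21]
      exact Finset.sum_Icc_succ_top (by omega) _
    rw [hsum, hτm]
    have hAc : Acoef I a (I - 1)
        = a (I - 1) - aSig I a (I - 1) / ((I : ℝ) - ((I - 1 : ℕ) : ℝ) + 1) := by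
      rw [Acoef, if_neg (by omega : ¬ (I - 1 = I))]
    have hAs : aSig I a (I - 1) = a (I - 1) + aSig I a I := by
      have := aSig_succ I a (I - 1) (by omega)
      rwa [show I - 1 + 1 = I from by omega] at this
    have hc : ((I - 1 : ℕ) : ℝ) = (I : ℝ) - 1 := by
      push_cast [Nat.cast_sub (by omega : 1 ≤ I)]; ring
    rw [hAc, show (I - 1) + 1 = I from by omega, hAs, hc,
      show (I : ℝ) - ((I : ℝ) - 1) = 1 from by ring]
    ring

/-- for `1 ≤ j ≤ I−1`,
`Σ_{k=1}^{j} θ(k)(τ(k)) = Σ_{k=1}^{j} θ(k)_{0−} + (I−j)·Σ_{k=1}^{j} γ(τ(k))·A(k)/(I−k)`;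
moreover, if `Σ_{k=1}^{I} θ(k)_{0−} = n` then `Σ_{k=1}^{I} θ(k)(τ(k)) = n`. -/
theorem stmt13 (T : ℝ) (κ γ : ℝ → ℝ) (hT : 0 < T)
    (hκcont : ContinuousOn κ (Set.Icc 0 T))
    (hκpos : ∀ t ∈ Set.Icc (0 : ℝ) T, 0 < κ t)
    (hγcont : ContinuousOn γ (Set.Icc 0 T))
    (hγmono : StrictMonoOn γ (Set.Icc 0 T))
    (hγ0 : γ 0 = 0) (hγT : γ T = 1)
    (I : ℕ) (hI : 3 ≤ I) (a : ℕ → ℝ) (τ : ℕ → ℝ)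
    (hτ0 : τ 0 = 0) (hτmono : ∀ j k : ℕ, j ≤ k → k ≤ I → τ j ≤ τ k)
    (hτlast : τ (I - 1) = τ I) (hτT : τ (I - 1) < T)
    (θ0 : ℕ → ℝ) (n : ℝ) :
    (∀ j : ℕ, 1 ≤ j → j ≤ I - 1 →
      ∑ k ∈ Finset.Icc 1 j, thetaEq κ γ I a τ θ0 k (τ k)
        = ∑ k ∈ Finset.Icc 1 j, θ0 k
          + ((I : ℝ) - (j : ℝ)) * ∑ k ∈ Finset.Icc 1 j,
              γ (τ k) * Acoef I a k / ((I : ℝ) - (k : ℝ))) ∧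
    ((∑ k ∈ Finset.Icc 1 I, θ0 k) = n →
      ∑ k ∈ Finset.Icc 1 I, thetaEq κ γ I a τ θ0 k (τ k) = n) := by
  -- κ at τ k is nonzero
  have hκτ : ∀ k : ℕ, k ≤ I → κ (τ k) ≠ 0 := by
    intro k hk
    refine ne_of_gt (hκpos _ ⟨?_, ?_⟩)
    · rw [← hτ0]; exact hτmono 0 k (Nat.zero_le _) hk
    · rcases le_or_gt k (I - 1) with h | h
      · exact le_of_lt (lt_of_le_of_lt (hτmono k (I - 1) h (by omega)) hτT)
      · have : k = I := by omega
        rw [this, ← hτlast]; exact hτT.le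
  -- value of θ(k)(τ k) for 1 ≤ k ≤ I - 1
  have htheta : ∀ k : ℕ, 1 ≤ k → k ≤ I - 1 →
      thetaEq κ γ I a τ θ0 k (τ k)
        = θ0 k + γ (τ k) * a k
          - (γ (τ k) * aSig I a (k + 1) / ((I : ℝ) - (k : ℝ))
            + ∑ i ∈ Finset.Icc 1 k, γ (τ i) * Acoef I a i / ((I : ℝ) - (i : ℝ))) := by
    intro k h1 h2
    have hκ := hκτ k (by omega)
    simp only [thetaEq, if_pos le_rfl]
    rw [muEval κ γ I hI a τ hτmono k h1 h2, neg_mul, neg_div,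
      mul_div_cancel_left₀ _ hκ]
    ring
  have part1 : ∀ j : ℕ, 1 ≤ j → j ≤ I - 1 →
      ∑ k ∈ Finset.Icc 1 j, thetaEq κ γ I a τ θ0 k (τ k)
        = ∑ k ∈ Finset.Icc 1 j, θ0 k
          + ((I : ℝ) - (j : ℝ)) * ∑ k ∈ Finset.Icc 1 j,
              γ (τ k) * Acoef I a k / ((I : ℝ) - (k : ℝ)) := by
    intro j hj1
    induction j, hj1 using Nat.le_induction with
    | base =>
      intro hjI
      simp only [Finset.Icc_self, Finset.sum_singleton]
      rw [htheta 1 le_rfl hjI]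
      simp only [Finset.Icc_self, Finset.sum_singleton, Nat.cast_one]
      rw [Acoef, if_neg (by omega : ¬ (1 = I)), aSig_succ I a 1 (by omega)]
      have hx : (0 : ℝ) < (I : ℝ) - 1 := by
        have : (1 : ℝ) < (I : ℝ) := by exact_mod_cast (by omega : 1 < I)
        linarith
      have hx0 : (I : ℝ) - 1 ≠ 0 := ne_of_gt hx
      have hx1 : (I : ℝ) - 1 + 1 ≠ 0 := by positivity
      push_cast
      field_simp
      ring
    | succ j hj ih =>
      intro hjI
      have ihj := ih (by omega)
      simp only [Finset.sum_Icc_succ_top (show (1:ℕ) ≤ j + 1 by omega)]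
      rw [ihj, htheta (j + 1) (by omega) hjI,
        Finset.sum_Icc_succ_top (show (1:ℕ) ≤ j + 1 by omega)]
      rw [Acoef, if_neg (by omega : ¬ (j + 1 = I)), aSig_succ I a (j + 1) (by omega)]
      have hx : (0 : ℝ) < (I : ℝ) - ((j : ℝ) + 1) := by
        have : (j : ℝ) + 1 < (I : ℝ) := by exact_mod_cast (by omega : j + 1 < I)
        linarith
      push_cast
      set x : ℝ := (I : ℝ) - ((j : ℝ) + 1) with hxdef
      have hx0 : x ≠ 0 := ne_of_gt hx
      have hx1 : x + 1 ≠ 0 := by positivity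
      have h2 : (I : ℝ) - (j : ℝ) = x + 1 := by rw [hxdef]; ring
      have h3 : (I : ℝ) - ((j : ℝ) + 1) + 1 = x + 1 := by rw [hxdef]
      rw [h2, h3]
      field_simp
      ring
  refine ⟨part1, ?_⟩
  intro hn
  have h1 := part1 (I - 1) (by omega) le_rfl
  have hκI := hκτ I le_rfl
  have hθI : thetaEq κ γ I a τ θ0 I (τ I)
      = θ0 I - ∑ i ∈ Finset.Icc 1 (I - 1), γ (τ i) * Acoef I a i / ((I : ℝ) - (i : ℝ)) := by
    simp only [thetaEq, if_pos le_rfl]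
    rw [← hτlast] at hκI ⊢
    rw [muEval κ γ I hI a τ hτmono (I - 1) (by omega) le_rfl, neg_mul, neg_div,
      mul_div_cancel_left₀ _ hκI, show (I - 1) + 1 = I from by omega,
      show aSig I a I = a I from by simp [aSig],
      show ((I - 1 : ℕ) : ℝ) = (I : ℝ) - 1 from by
        push_cast [Nat.cast_sub (by omega : 1 ≤ I)]; ring,
      show (I : ℝ) - ((I : ℝ) - 1) = 1 from by ring]
    ring
  have hsum : ∑ k ∈ Finset.Icc 1 I, thetaEq κ γ I a τ θ0 k (τ k)
      = (∑ k ∈ Finset.Icc 1 (I - 1), thetaEq κ γ I a τ θ0 k (τ k))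
        + thetaEq κ γ I a τ θ0 I (τ I) := by
    have h21 : I - 1 + 1 = I := by omega
    conv_lhs => rw [← h21]
    rw [Finset.sum_Icc_succ_top (by omega) _, h21]
  have hsum0 : ∑ k ∈ Finset.Icc 1 I, θ0 k
      = (∑ k ∈ Finset.Icc 1 (I - 1), θ0 k) + θ0 I := by
    have h21 : I - 1 + 1 = I := by omega
    conv_lhs => rw [← h21]
    rw [Finset.sum_Icc_succ_top (by omega) _, h21]
  rw [hsum, h1, hθI, show ((I - 1 : ℕ) : ℝ) = (I : ℝ) - 1 from by
      push_cast [Nat.cast_sub (by omega : 1 ≤ I)]; ring,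
    show (I : ℝ) - ((I : ℝ) - 1) = 1 from by ring]
  rw [hsum0] at hn
  linarith
end

section
/- One has ∫_0^T μ(t) dt = −∫_0^T κ(t)·γ(t)·a_Σ^{≥1}/I dt + Σ_{k=1}^{I−2} (A(k)/(I−k)) · F(τ(k)); equivalently, −∫_0^T μ(t) dt = ∫_0^T κ(t)·γ(t)·a_Σ^{≥1}/I dt − Σ_{k=1}^{I−2} (A(k)/(I−k)) · ∫_{τ(k)}^T κ(t)·(γ(t) − γ(τ(k))) dt. -/
open MeasureTheory

/-- `F(t) = ∫_t^T κ(u)(γ(u) − γ(t)) du`. -/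
noncomputable def Ffun (T : ℝ) (κ γ : ℝ → ℝ) (t : ℝ) : ℝ :=
  ∫ u in t..T, κ u * (γ u - γ t)

open scoped Interval

private lemma aSig_step (I : ℕ) (a : ℕ → ℝ) (k : ℕ) (hk : k ≤ I) :
    aSig I a k = a k + aSig I a (k + 1) := by
  rw [aSig, aSig, Finset.Icc_eq_cons_Ioc hk, Finset.sum_cons, Finset.Icc_add_one_left_eq_Ioc]

private lemma tele_step (I : ℕ) (a : ℕ → ℝ) (k : ℕ) (hI : 3 ≤ I) (hk1 : 1 ≤ k)
    (hk2 : k ≤ I - 2) :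
    aSig I a (k + 1) / ((I : ℝ) - k) =
      aSig I a k / ((I : ℝ) - k + 1) - Acoef I a k / ((I : ℝ) - k) := by
  have hkI : k < I := by omega
  have hck : (k : ℝ) < I := by exact_mod_cast hkI
  have h1 : ((I : ℝ) - k) ≠ 0 := by linarith
  have h2 : ((I : ℝ) - k + 1) ≠ 0 := by linarith
  rw [Acoef, if_neg (by omega), aSig_step I a k hkI.le]
  field_simp
  ring

private lemma tele (I : ℕ) (a : ℕ → ℝ) (hI : 3 ≤ I) :
    ∀ j, j ≤ I - 2 →
    aSig I a (j + 1) / ((I : ℝ) - j) =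
      aSig I a 1 / I - ∑ k ∈ Finset.Icc 1 j, Acoef I a k / ((I : ℝ) - k) := by
  intro j
  induction j with
  | zero => intro _; simp
  | succ j ih =>
    intro hj
    have e1 := tele_step I a (j + 1) hI (by omega) hj
    have e2 : ((I : ℝ) - ((j + 1 : ℕ) : ℝ) + 1) = (I : ℝ) - j := by push_cast; ring
    rw [e2] at e1
    rw [e1, ih (by omega), Finset.sum_Icc_succ_top (by omega : 1 ≤ j + 1)]
    ring

private lemma lastIdx_mem (I : ℕ) (τ : ℕ → ℝ) (t : ℝ) (hI : 3 ≤ I) (hτ0 : τ 0 = 0)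
    (ht : 0 ≤ t) :
    lastIdx I τ t ∈ Finset.filter (fun j => τ j ≤ t) (Finset.range (I - 1)) := by
  have hne : (Finset.filter (fun j => τ j ≤ t) (Finset.range (I - 1))).Nonempty :=
    ⟨0, Finset.mem_filter.2 ⟨Finset.mem_range.2 (by omega), by rw [hτ0]; exact ht⟩⟩
  obtain ⟨b, hb, he⟩ := Finset.exists_mem_eq_sup _ hne id
  rw [lastIdx, he]
  exact hb

private lemma mu_eq (κ γ : ℝ → ℝ) (I : ℕ) (hI : 3 ≤ I) (a : ℕ → ℝ) (τ : ℕ → ℝ)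
    (hτ0 : τ 0 = 0) (hτmono : ∀ j k : ℕ, j ≤ k → k ≤ I → τ j ≤ τ k)
    (t : ℝ) (ht : 0 ≤ t) :
    muDrift κ γ I a τ t = -(κ t * γ t * aSig I a 1 / (I : ℝ))
      + ∑ k ∈ Finset.Icc 1 (I - 2), Acoef I a k / ((I : ℝ) - (k : ℝ)) *
          (if τ k ≤ t then κ t * (γ t - γ (τ k)) else 0) := by
  rw [muDrift]
  by_cases hcase : t < τ (I - 1)
  · rw [if_pos hcase]
    have hmem := lastIdx_mem I τ t hI hτ0 ht
    rw [Finset.mem_filter, Finset.mem_range] at hmem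
    set j := lastIdx I τ t with hj
    have hjI : j ≤ I - 2 := by omega
    have hτj : τ j ≤ t := hmem.2
    have hfilt : Finset.filter (fun k => τ k ≤ t) (Finset.Icc 1 (I - 2))
        = Finset.Icc 1 j := by
      ext k
      simp only [Finset.mem_filter, Finset.mem_Icc]
      constructor
      · rintro ⟨⟨hk1, hk2⟩, hk3⟩
        refine ⟨hk1, ?_⟩
        rw [hj, lastIdx]
        exact Finset.le_sup (f := id)
          (Finset.mem_filter.2 ⟨Finset.mem_range.2 (by omega), hk3⟩)
      · rintro ⟨hk1, hk2⟩
        exact ⟨⟨hk1, le_trans hk2 hjI⟩, le_trans (hτmono k j hk2 (by omega)) hτj⟩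
    have hsum : ∑ k ∈ Finset.Icc 1 (I - 2), Acoef I a k / ((I : ℝ) - (k : ℝ)) *
          (if τ k ≤ t then κ t * (γ t - γ (τ k)) else 0)
        = ∑ k ∈ Finset.Icc 1 j, Acoef I a k / ((I : ℝ) - (k : ℝ)) *
          (κ t * (γ t - γ (τ k))) := by
      have hc : ∀ k ∈ Finset.Icc 1 (I - 2), Acoef I a k / ((I : ℝ) - (k : ℝ)) *
            (if τ k ≤ t then κ t * (γ t - γ (τ k)) else 0)
          = if τ k ≤ t then Acoef I a k / ((I : ℝ) - (k : ℝ)) *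
              (κ t * (γ t - γ (τ k))) else 0 := fun k _ => by rw [mul_ite, mul_zero]
      rw [Finset.sum_congr rfl hc, ← Finset.sum_filter, hfilt]
    have hexp : ∑ k ∈ Finset.Icc 1 j, Acoef I a k / ((I : ℝ) - (k : ℝ)) *
          (κ t * (γ t - γ (τ k)))
        = κ t * (γ t * ∑ k ∈ Finset.Icc 1 j, Acoef I a k / ((I : ℝ) - (k : ℝ)))
          - κ t * ∑ k ∈ Finset.Icc 1 j, γ (τ k) * Acoef I a k / ((I : ℝ) - (k : ℝ)) := by
      rw [Finset.mul_sum, Finset.mul_sum, Finset.mul_sum, ← Finset.sum_sub_distrib]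
      exact Finset.sum_congr rfl fun k _ => by ring
    rw [hsum, hexp, mul_div_assoc, tele I a hI j hjI]
    ring
  · rw [if_neg hcase]
    push_neg at hcase
    have hall : ∀ k ∈ Finset.Icc 1 (I - 2), Acoef I a k / ((I : ℝ) - (k : ℝ)) *
          (if τ k ≤ t then κ t * (γ t - γ (τ k)) else 0)
        = Acoef I a k / ((I : ℝ) - (k : ℝ)) * (κ t * (γ t - γ (τ k))) := by
      intro k hk
      rw [Finset.mem_Icc] at hk
      rw [if_pos (le_trans (hτmono k (I - 1) (by omega) (by omega)) hcase)]
    have hexp : ∑ k ∈ Finset.Icc 1 (I - 2), Acoef I a k / ((I : ℝ) - (k : ℝ)) *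
          (κ t * (γ t - γ (τ k)))
        = κ t * (γ t * ∑ k ∈ Finset.Icc 1 (I - 2), Acoef I a k / ((I : ℝ) - (k : ℝ)))
          - κ t * ∑ k ∈ Finset.Icc 1 (I - 2), γ (τ k) * Acoef I a k / ((I : ℝ) - (k : ℝ)) := by
      rw [Finset.mul_sum, Finset.mul_sum, Finset.mul_sum, ← Finset.sum_sub_distrib]
      exact Finset.sum_congr rfl fun k _ => by ring
    rw [Finset.sum_congr rfl hall, hexp]
    have h1 : I - 2 + 1 = I - 1 := by omega
    have h2 : ((I : ℝ) - ((I - 2 : ℕ) : ℝ)) = 2 := by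
      rw [Nat.cast_sub (by omega : 2 ≤ I)]; push_cast; ring
    have htel := tele I a hI (I - 2) le_rfl
    rw [h1, h2] at htel
    rw [mul_div_assoc, htel]
    ring

private lemma indicator_int (T c : ℝ) (κ γ : ℝ → ℝ) (hc0 : 0 ≤ c) (hcT : c ≤ T)
    (hκ : ContinuousOn κ (Set.Icc 0 T)) (hγ : ContinuousOn γ (Set.Icc 0 T)) :
    IntervalIntegrable (fun t => if c ≤ t then κ t * (γ t - γ c) else 0) volume 0 T ∧
    (∫ t in (0:ℝ)..T, (if c ≤ t then κ t * (γ t - γ c) else 0)) =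
      ∫ t in c..T, κ t * (γ t - γ c) := by
  set f : ℝ → ℝ := fun t => if c ≤ t then κ t * (γ t - γ c) else 0 with hf
  have hg : ContinuousOn (fun t => κ t * (γ t - γ c)) (Set.Icc c T) :=
    (hκ.mono (Set.Icc_subset_Icc hc0 le_rfl)).mul
      ((hγ.mono (Set.Icc_subset_Icc hc0 le_rfl)).sub continuousOn_const)
  have hgi : IntervalIntegrable (fun t => κ t * (γ t - γ c)) volume c T := by
    apply ContinuousOn.intervalIntegrable
    rwa [Set.uIcc_of_le hcT]
  have h1 : Set.EqOn f (fun _ => (0:ℝ)) (Set.uIcc 0 c) := by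
    intro x hx
    rw [Set.uIcc_of_le hc0] at hx
    by_cases h : c ≤ x
    · have : x = c := le_antisymm hx.2 h
      simp [f, h, this]
    · simp [f, h]
  have h2 : Set.EqOn (fun t => κ t * (γ t - γ c)) f (Set.uIcc c T) := by
    intro x hx
    rw [Set.uIcc_of_le hcT] at hx
    simp [f, hx.1]
  have int1 : IntervalIntegrable f volume 0 c := by
    apply (intervalIntegrable_const (c := (0:ℝ))).congr
    intro x hx
    exact (h1 (Set.uIoc_subset_uIcc hx)).symm
  have int2 : IntervalIntegrable f volume c T := by
    apply hgi.congr
    intro x hx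
    exact h2 (Set.uIoc_subset_uIcc hx)
  refine ⟨int1.trans int2, ?_⟩
  rw [← intervalIntegral.integral_add_adjacent_intervals int1 int2]
  rw [intervalIntegral.integral_congr h1, intervalIntegral.integral_congr h2.symm]
  simp


/-- `∫_0^T μ(t) dt = −∫_0^T κ(t)·γ(t)·a_Σ^{≥1}/I dt
  + Σ_{k=1}^{I−2} (A(k)/(I−k))·F(τ(k))`; equivalently,
`−∫_0^T μ(t) dt = ∫_0^T κ(t)·γ(t)·a_Σ^{≥1}/I dt
  − Σ_{k=1}^{I−2} (A(k)/(I−k))·∫_{τ(k)}^T κ(t)·(γ(t) − γ(τ(k))) dt`. -/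
theorem stmt17 (T : ℝ) (κ γ : ℝ → ℝ) (hT : 0 < T)
    (hκcont : ContinuousOn κ (Set.Icc 0 T))
    (hκpos : ∀ t ∈ Set.Icc (0 : ℝ) T, 0 < κ t)
    (hγcont : ContinuousOn γ (Set.Icc 0 T))
    (hγmono : StrictMonoOn γ (Set.Icc 0 T))
    (hγ0 : γ 0 = 0) (hγT : γ T = 1)
    (I : ℕ) (hI : 3 ≤ I) (a : ℕ → ℝ) (τ : ℕ → ℝ)
    (hτ0 : τ 0 = 0) (hτmono : ∀ j k : ℕ, j ≤ k → k ≤ I → τ j ≤ τ k)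
    (hτlast : τ (I - 1) = τ I) (hτT : τ (I - 1) < T)
    :
    (∫ t in (0 : ℝ)..T, muDrift κ γ I a τ t)
        = -(∫ t in (0 : ℝ)..T, κ t * γ t * aSig I a 1 / (I : ℝ))
          + ∑ k ∈ Finset.Icc 1 (I - 2),
              Acoef I a k / ((I : ℝ) - (k : ℝ)) * Ffun T κ γ (τ k) ∧
    -(∫ t in (0 : ℝ)..T, muDrift κ γ I a τ t)
        = (∫ t in (0 : ℝ)..T, κ t * γ t * aSig I a 1 / (I : ℝ))
          - ∑ k ∈ Finset.Icc 1 (I - 2),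
              Acoef I a k / ((I : ℝ) - (k : ℝ))
                * ∫ t in (τ k)..T, κ t * (γ t - γ (τ k)) := by
  have haux : ∀ k ∈ Finset.Icc 1 (I - 2), 0 ≤ τ k ∧ τ k ≤ T := by
    intro k hk
    rw [Finset.mem_Icc] at hk
    constructor
    · rw [← hτ0]; exact hτmono 0 k (Nat.zero_le _) (by omega)
    · exact le_of_lt (lt_of_le_of_lt (hτmono k (I - 1) (by omega) (by omega)) hτT)
  have hF0 : IntervalIntegrable (fun t => κ t * γ t * aSig I a 1 / (I : ℝ)) volume 0 T := by
    apply ContinuousOn.intervalIntegrable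
    rw [Set.uIcc_of_le hT.le]
    exact ((hκcont.mul hγcont).mul continuousOn_const).div_const _
  have hind := fun k (hk : k ∈ Finset.Icc 1 (I - 2)) =>
    indicator_int T (τ k) κ γ (haux k hk).1 (haux k hk).2 hκcont hγcont
  have hintk : ∀ k ∈ Finset.Icc 1 (I - 2),
      IntervalIntegrable (fun t => Acoef I a k / ((I : ℝ) - (k : ℝ)) *
        (if τ k ≤ t then κ t * (γ t - γ (τ k)) else 0)) volume 0 T :=
    fun k hk => (hind k hk).1.const_mul _
  have key : (∫ t in (0 : ℝ)..T, muDrift κ γ I a τ t)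
      = -(∫ t in (0 : ℝ)..T, κ t * γ t * aSig I a 1 / (I : ℝ))
        + ∑ k ∈ Finset.Icc 1 (I - 2),
            Acoef I a k / ((I : ℝ) - (k : ℝ)) * Ffun T κ γ (τ k) := by
    have hmu : (∫ t in (0 : ℝ)..T, muDrift κ γ I a τ t)
        = ∫ t in (0 : ℝ)..T, (-(κ t * γ t * aSig I a 1 / (I : ℝ))
            + ∑ k ∈ Finset.Icc 1 (I - 2), Acoef I a k / ((I : ℝ) - (k : ℝ)) *
                (if τ k ≤ t then κ t * (γ t - γ (τ k)) else 0)) := by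
      apply intervalIntegral.integral_congr
      intro t htmem
      rw [Set.uIcc_of_le hT.le] at htmem
      exact mu_eq κ γ I hI a τ hτ0 hτmono t htmem.1
    have hadd := intervalIntegral.integral_add hF0.neg (IntervalIntegrable.sum _ hintk)
    simp only [Pi.neg_apply, Finset.sum_apply] at hadd
    rw [hmu, hadd, intervalIntegral.integral_neg, intervalIntegral.integral_finset_sum hintk]
    congr 1
    refine Finset.sum_congr rfl fun k hk => ?_
    rw [intervalIntegral.integral_const_mul, (hind k hk).2]
    rfl
  refine ⟨key, ?_⟩
  rw [key]
  simp only [Ffun]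
  ring
end
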